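/- Let f : I ↠ I' be a surjection of finite nonempty sets. Let Tw(I)^f ⊆ Tw(I) be the full subcategory of objects (I → J → K) such that I → K factors through f (i.e., K is a quotient of I'). Then: (a) the full embedding Tw(I)^f ⊆ Tw(I) admits a right adjoint β sending (I → J → K) to (I → J → K'), where K' = inf(I', K) is the common quotient of I corresponding to the join of the equivalence relations determined by I → I' and I → K; (b) the full embedding Tw(I') ⊆ Tw(I)^f, sending (I' → J' → K') to (I → J' → K') via precomposition with f, admits a left adjoint, and hence is cofinal. -/

import Mathlib

open CategoryTheory Function Limits

/-- An object of the category `Tw(I)`: a diagram `I ↠ J ↠ K` of surjections of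
finite nonempty sets. -/
structure TwObj (I : Type) : Type 1 where
  J : Type
  K : Type
  jFin : Finite J
  kFin : Finite K
  jNe : Nonempty J
  kNe : Nonempty K
  p : I → J
  q : J → K
  hp : Function.Surjective p
  hq : Function.Surjective q

/-- A morphism in `Tw(I)` from `(I → J₁ → K₁)` to `(I → J₂ → K₂)`: a surjection
`J₁ → J₂` under `I` together with a surjection `K₂ → K₁` such that the composite
`J₁ → J₂ → K₂ → K₁` equals `J₁ → K₁`. -/
structure TwHom {I : Type} (A B : TwObj I) : Type where
  φ : A.J → B.J
  ψ : B.K → A.K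
  hφ : Function.Surjective φ
  hψ : Function.Surjective ψ
  hp : ∀ i, φ (A.p i) = B.p i
  hq : ∀ j, ψ (B.q (φ j)) = A.q j

theorem TwHom.ext' {I : Type} {A B : TwObj I} :
    ∀ {f g : TwHom A B}, f.φ = g.φ → f.ψ = g.ψ → f = g
  | ⟨_, _, _, _, _, _⟩, ⟨_, _, _, _, _, _⟩, rfl, rfl => rfl

instance twCategory (I : Type) : Category (TwObj I) where
  Hom A B := TwHom A B
  id A := ⟨_root_.id, _root_.id, Function.surjective_id, Function.surjective_id,
    fun _ => rfl, fun _ => rfl⟩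
  comp := fun f g => ⟨g.φ ∘ f.φ, f.ψ ∘ g.ψ, g.hφ.comp f.hφ, f.hψ.comp g.hψ,
    fun i => by simp only [Function.comp_apply, f.hp, g.hp],
    fun j => by simp only [Function.comp_apply, g.hq, f.hq]⟩
  id_comp := fun f => TwHom.ext' rfl rfl
  comp_id := fun f => TwHom.ext' rfl rfl
  assoc := fun f g h => TwHom.ext' rfl rfl

/-- Membership in the full subcategory `Tw(I)^f ⊆ Tw(I)`: the diagram `(I → J → K)` is
such that `I → K` factors through `f : I → I'` (i.e. `K` is a quotient of `I'`). -/
def twQuot {I : Type} (I' : Type) (f : I → I') (A : TwObj I) : Prop :=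
  ∃ g : I' → A.K, ∀ i, g (f i) = A.q (A.p i)

/-- The diagram `(I → J → inf(I', K))`, where `inf(I', K)` is the common quotient of `I`
by the join of the equivalence relations determined by `I → I'` and `I → K`. -/
noncomputable def infObj {I I' : Type} [Finite I] (f : I → I') (A : TwObj I) : TwObj I where
  J := A.J
  K := Quotient (Setoid.ker f ⊔ Setoid.ker (fun i => A.q (A.p i)))
  jFin := A.jFin
  kFin := Finite.of_surjective (Quotient.mk _) fun c => Quotient.exists_rep c
  jNe := A.jNe
  kNe := by
    obtain ⟨j⟩ := A.jNe
    obtain ⟨i, -⟩ := A.hp j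
    exact ⟨Quotient.mk _ i⟩
  p := A.p
  q := fun j => Quotient.mk _ (Function.surjInv A.hp j)
  hp := A.hp
  hq := by
    intro c
    obtain ⟨i, rfl⟩ := Quotient.exists_rep c
    refine ⟨A.p i, Quotient.sound ?_⟩
    have h : A.q (A.p (Function.surjInv A.hp (A.p i))) = A.q (A.p i) :=
      congrArg A.q (Function.surjInv_eq A.hp (A.p i))
    exact Setoid.le_def.mp le_sup_right h

/-- The full embedding `Tw(I') ⊆ Tw(I)` (precomposition with `f`), landing in `Tw(I)^f`. -/
def twRes {I I' : Type} (f : I → I') (hf : Function.Surjective f) : TwObj I' ⥤ TwObj I where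
  obj A := ⟨A.J, A.K, A.jFin, A.kFin, A.jNe, A.kNe, fun i => A.p (f i), A.q,
    A.hp.comp hf, A.hq⟩
  map g := ⟨g.φ, g.ψ, g.hφ, g.hψ, fun i => g.hp (f i), g.hq⟩
  map_id _ := rfl
  map_comp _ _ := rfl

/-- The full embedding `Tw(I') ⊆ Tw(I)^f`. -/
def twResF {I : Type} (I' : Type) (f : I → I') (hf : Function.Surjective f) :
    TwObj I' ⥤ ObjectProperty.FullSubcategory (twQuot I' f) :=
  ObjectProperty.lift _ (twRes f hf) fun A => ⟨fun i' => A.q (A.p i'), fun _ => rfl⟩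

set_option linter.unusedSectionVars false
section Aux

open Function CategoryTheory

private lemma rel_sup_left {α β γ : Type*} (u : α → β) (v : α → γ) {a b : α}
    (hab : u a = u b) : (Setoid.ker u ⊔ Setoid.ker v) a b :=
  Setoid.le_def.mp le_sup_left hab

private lemma rel_sup_right {α β γ : Type*} (u : α → β) (v : α → γ) {a b : α}
    (hab : v a = v b) : (Setoid.ker u ⊔ Setoid.ker v) a b :=
  Setoid.le_def.mp le_sup_right hab

private lemma sound_sup_left {α β γ : Type*} (u : α → β) (v : α → γ) {a b : α}
    (hab : u a = u b) :
    Quotient.mk (Setoid.ker u ⊔ Setoid.ker v) a = Quotient.mk _ b :=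
  Quotient.sound (rel_sup_left u v hab)

private lemma sound_sup_right {α β γ : Type*} (u : α → β) (v : α → γ) {a b : α}
    (hab : v a = v b) :
    Quotient.mk (Setoid.ker u ⊔ Setoid.ker v) a = Quotient.mk _ b :=
  Quotient.sound (rel_sup_right u v hab)

private lemma lift_resp {α β γ δ : Type*} (u : α → β) (v : α → γ) (h : α → δ)
    (h1 : ∀ a b, u a = u b → h a = h b) (h2 : ∀ a b, v a = v b → h a = h b) :
    ∀ a b, (Setoid.ker u ⊔ Setoid.ker v) a b → h a = h b :=
  fun a b hab => Setoid.le_def.mp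
    (show Setoid.ker u ⊔ Setoid.ker v ≤ Setoid.ker h from
      sup_le (Setoid.le_def.mpr fun {x y} hxy => h1 x y hxy)
        (Setoid.le_def.mpr fun {x y} hxy => h2 x y hxy)) hab

variable {I I' : Type} [Finite I] [Nonempty I] (f : I → I') (hf : Function.Surjective f)

/-! ### Part (a) -/

lemma infObj_qp (A : TwObj I) (i : I) :
    (infObj f A).q (A.p i) = Quotient.mk _ i :=
  sound_sup_right f (fun i => A.q (A.p i))
    (congrArg A.q (Function.surjInv_eq A.hp (A.p i)))

lemma qp_comp {A B : TwObj I} (h : TwHom A B) (i : I) :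
    A.q (A.p i) = h.ψ (B.q (B.p i)) := by
  rw [← h.hp i, h.hq]

/-- The lift of `⟦·⟧ : I → (infObj f A).K` along a morphism `A ⟶ B`. -/
noncomputable def betaPsi {A B : TwObj I} (h : TwHom A B) :
    (infObj f B).K → (infObj f A).K :=
  Quotient.lift (fun i => Quotient.mk _ i)
    (lift_resp f (fun i => B.q (B.p i)) _
      (fun a b hab => sound_sup_left f (fun i => A.q (A.p i)) hab)
      (fun a b hab => sound_sup_right f (fun i => A.q (A.p i))
        (by show A.q (A.p a) = A.q (A.p b)
            rw [qp_comp h a, qp_comp h b]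
            exact congrArg h.ψ hab)))

noncomputable def betaF : TwObj I ⥤ ObjectProperty.FullSubcategory (twQuot I' f) where
  obj A := ⟨infObj f A, fun i' => Quotient.mk _ (Function.surjInv hf i'),
    fun i => (sound_sup_left f (fun i => A.q (A.p i))
      (Function.surjInv_eq hf (f i))).trans (infObj_qp f A i).symm⟩
  map {A B} h := { hom :=
    { φ := h.φ
      ψ := betaPsi f h
      hφ := h.hφ
      hψ := fun c => by
        obtain ⟨i, rfl⟩ := Quotient.exists_rep c
        exact ⟨Quotient.mk _ i, rfl⟩
      hp := h.hp
      hq := fun (j : A.J) => sound_sup_right f (fun i => A.q (A.p i)) (by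
        show A.q (A.p (Function.surjInv B.hp (h.φ j)))
          = A.q (A.p (Function.surjInv A.hp j))
        rw [qp_comp h, qp_comp h, Function.surjInv_eq B.hp,
          ← h.hp (Function.surjInv A.hp j), Function.surjInv_eq A.hp]) } }
  map_id A := InducedCategory.hom_ext (TwHom.ext' rfl (by
    funext c; obtain ⟨i, rfl⟩ := Quotient.exists_rep c; rfl))
  map_comp h g := InducedCategory.hom_ext (TwHom.ext' rfl (by
    funext c; obtain ⟨i, rfl⟩ := Quotient.exists_rep c; rfl))

/-- The counit `infObj f A ⟶ A` of the adjunction of part (a). -/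
noncomputable def counitA (A : TwObj I) : TwHom (infObj f A) A where
  φ := id
  ψ := fun k => Quotient.mk _ (Function.surjInv (A.hq.comp A.hp) k)
  hφ := Function.surjective_id
  hψ := fun c => by
    obtain ⟨i, rfl⟩ := Quotient.exists_rep c
    exact ⟨A.q (A.p i), sound_sup_right f (fun i => A.q (A.p i))
      (Function.surjInv_eq (A.hq.comp A.hp) (A.q (A.p i)))⟩
  hp := fun _ => rfl
  hq := fun j => sound_sup_right f (fun i => A.q (A.p i)) (by
    show A.q (A.p (Function.surjInv (A.hq.comp A.hp) (A.q j)))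
      = A.q (A.p (Function.surjInv A.hp j))
    rw [Function.surjInv_eq A.hp j]
    exact Function.surjInv_eq (A.hq.comp A.hp) (A.q j))

/-- The unit `X ⟶ infObj f X` of the adjunction of part (a). -/
noncomputable def unitA (X : ObjectProperty.FullSubcategory (twQuot I' f)) :
    TwHom X.obj (infObj f X.obj) where
  φ := id
  ψ := Quotient.lift (fun i => X.obj.q (X.obj.p i))
    (lift_resp f (fun i => X.obj.q (X.obj.p i)) _
      (fun a b hab => by
        obtain ⟨g, hg⟩ := X.property
        show X.obj.q (X.obj.p a) = X.obj.q (X.obj.p b)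
        rw [← hg a, ← hg b, hab])
      (fun a b hab => hab))
  hφ := Function.surjective_id
  hψ := fun k => by
    obtain ⟨i, hi⟩ := (X.obj.hq.comp X.obj.hp) k
    exact ⟨Quotient.mk _ i, hi⟩
  hp := fun _ => rfl
  hq := fun j => congrArg X.obj.q (Function.surjInv_eq X.obj.hp j)

/-- The adjunction of part (a). -/
noncomputable def adjA : ObjectProperty.ι (twQuot I' f) ⊣ betaF f hf :=
  Adjunction.mkOfUnitCounit
    { unit :=
        { app := fun X => ⟨unitA f X⟩
          naturality := fun X Y u => InducedCategory.hom_ext (TwHom.ext' rfl (by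
            funext c; obtain ⟨i, rfl⟩ := Quotient.exists_rep c
            exact (qp_comp u.hom i).symm)) }
      counit :=
        { app := fun A => counitA f A
          naturality := fun A B h => TwHom.ext' rfl (by
            funext k
            refine sound_sup_right f (fun i => A.q (A.p i)) ?_
            show A.q (A.p (Function.surjInv (B.hq.comp B.hp) k))
              = A.q (A.p (Function.surjInv (A.hq.comp A.hp) (h.ψ k)))
            rw [qp_comp h]
            rw [show B.q (B.p (Function.surjInv (B.hq.comp B.hp) k)) = k from
              Function.surjInv_eq (B.hq.comp B.hp) k]
            exact (Function.surjInv_eq (A.hq.comp A.hp) (h.ψ k)).symm) }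
      left_triangle := by
        apply NatTrans.ext; funext X
        refine TwHom.ext' rfl ?_
        funext k
        exact Function.surjInv_eq (X.obj.hq.comp X.obj.hp) k
      right_triangle := by
        apply NatTrans.ext; funext A
        refine InducedCategory.hom_ext (TwHom.ext' rfl ?_)
        funext c; obtain ⟨i, rfl⟩ := Quotient.exists_rep c
        exact infObj_qp f A i }

/-! ### Part (b) -/

/-- The value of the left adjoint `L` of part (b). -/
noncomputable def LObj (X : ObjectProperty.FullSubcategory (twQuot I' f)) : TwObj I' where
  J := Quotient (Setoid.ker f ⊔ Setoid.ker X.obj.p)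
  K := X.obj.K
  jFin := Finite.of_surjective (Quotient.mk _) fun c => Quotient.exists_rep c
  kFin := X.obj.kFin
  jNe := ⟨Quotient.mk _ (Classical.arbitrary I)⟩
  kNe := X.obj.kNe
  p := fun i' => Quotient.mk _ (Function.surjInv hf i')
  q := Quotient.lift (fun i => X.obj.q (X.obj.p i))
    (lift_resp f X.obj.p (fun i => X.obj.q (X.obj.p i))
      (fun a b hab => by
        obtain ⟨g, hg⟩ := X.property
        show X.obj.q (X.obj.p a) = X.obj.q (X.obj.p b)
        rw [← hg a, ← hg b, hab])
      (fun a b hab => congrArg X.obj.q hab))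
  hp := fun c => by
    obtain ⟨i, rfl⟩ := Quotient.exists_rep c
    exact ⟨f i, sound_sup_left f X.obj.p (Function.surjInv_eq hf (f i))⟩
  hq := fun k => by
    obtain ⟨i, hi⟩ := (X.obj.hq.comp X.obj.hp) k
    exact ⟨Quotient.mk _ i, hi⟩

/-- The left adjoint `L` of part (b). -/
noncomputable def LF : ObjectProperty.FullSubcategory (twQuot I' f) ⥤ TwObj I' where
  obj X := LObj f hf X
  map {X Y} u :=
    { φ := Quotient.lift (fun i => Quotient.mk _ i)
        (lift_resp f X.obj.p _
          (fun a b hab => sound_sup_left f Y.obj.p hab)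
          (fun a b hab => sound_sup_right f Y.obj.p (by
            rw [← u.hom.hp a, ← u.hom.hp b, hab])))
      ψ := u.hom.ψ
      hφ := fun c => by
        obtain ⟨i, rfl⟩ := Quotient.exists_rep c
        exact ⟨Quotient.mk _ i, rfl⟩
      hψ := u.hom.hψ
      hp := fun _ => rfl
      hq := fun c => by
        obtain ⟨i, rfl⟩ := Quotient.exists_rep c
        show u.hom.ψ (Y.obj.q (Y.obj.p i)) = X.obj.q (X.obj.p i)
        exact (qp_comp u.hom i).symm }
  map_id X := TwHom.ext' (by
    funext c; obtain ⟨i, rfl⟩ := Quotient.exists_rep c; rfl) rfl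
  map_comp u v := TwHom.ext' (by
    funext c; obtain ⟨i, rfl⟩ := Quotient.exists_rep c; rfl) rfl

/-- The unit of the adjunction of part (b). -/
noncomputable def unitB (X : ObjectProperty.FullSubcategory (twQuot I' f)) :
    TwHom X.obj ((twRes f hf).obj (LObj f hf X)) where
  φ := fun j => Quotient.mk _ (Function.surjInv X.obj.hp j)
  ψ := id
  hφ := fun c => by
    obtain ⟨i, rfl⟩ := Quotient.exists_rep c
    exact ⟨X.obj.p i, sound_sup_right f X.obj.p
      (Function.surjInv_eq X.obj.hp (X.obj.p i))⟩
  hψ := Function.surjective_id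
  hp := fun i => (sound_sup_right f X.obj.p
      (Function.surjInv_eq X.obj.hp (X.obj.p i))).trans
    (sound_sup_left f X.obj.p (Function.surjInv_eq hf (f i))).symm
  hq := fun j => congrArg X.obj.q (Function.surjInv_eq X.obj.hp j)

/-- The counit of the adjunction of part (b). -/
noncomputable def counitB (Y : TwObj I') :
    TwHom (LObj f hf ((twResF I' f hf).obj Y)) Y where
  φ := Quotient.lift (fun i => Y.p (f i))
    (lift_resp f (fun i => Y.p (f i)) (fun i => Y.p (f i))
      (fun a b hab => congrArg Y.p hab)
      (fun a b hab => hab))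
  ψ := id
  hφ := fun j' => by
    obtain ⟨i, hi⟩ := (Y.hp.comp hf) j'
    exact ⟨Quotient.mk _ i, hi⟩
  hψ := Function.surjective_id
  hp := fun i' => congrArg Y.p (Function.surjInv_eq hf i')
  hq := fun c => by
    obtain ⟨i, rfl⟩ := Quotient.exists_rep c; rfl

/-- The adjunction of part (b). -/
noncomputable def adjB : LF f hf ⊣ twResF I' f hf :=
  Adjunction.mkOfUnitCounit
    { unit :=
        { app := fun X => ⟨unitB f hf X⟩
          naturality := fun X Y u => InducedCategory.hom_ext (TwHom.ext' (by
            funext j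
            refine sound_sup_right f Y.obj.p ?_
            show Y.obj.p (Function.surjInv Y.obj.hp (u.hom.φ j))
              = Y.obj.p (Function.surjInv X.obj.hp j)
            rw [Function.surjInv_eq Y.obj.hp,
              ← u.hom.hp (Function.surjInv X.obj.hp j),
              Function.surjInv_eq X.obj.hp]) rfl) }
      counit :=
        { app := fun Y => counitB f hf Y
          naturality := fun Y Z v => TwHom.ext' (by
            funext c; obtain ⟨i, rfl⟩ := Quotient.exists_rep c
            exact (v.hp (f i)).symm) rfl }
      left_triangle := by
        apply NatTrans.ext; funext X
        refine TwHom.ext' ?_ rfl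
        funext c; obtain ⟨i, rfl⟩ := Quotient.exists_rep c
        exact sound_sup_left f X.obj.p (Function.surjInv_eq hf (f i))
      right_triangle := by
        apply NatTrans.ext; funext Y
        refine InducedCategory.hom_ext (TwHom.ext' ?_ rfl)
        funext j
        exact Function.surjInv_eq (Y.hp.comp hf) j }

end Aux

/-- (a) The full embedding `Tw(I)^f ⊆ Tw(I)` admits a right adjoint `β` sending
`(I → J → K)` to `(I → J → inf(I', K))`; (b) the full embedding `Tw(I') ⊆ Tw(I)^f`
admits a left adjoint, and hence is cofinal. -/
theorem stmt6 (I I' : Type) [Finite I] [Nonempty I] [Finite I'] [Nonempty I']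
    (f : I → I') (hf : Function.Surjective f) :
    (∃ β : TwObj I ⥤ ObjectProperty.FullSubcategory (twQuot I' f),
        Nonempty (ObjectProperty.ι (twQuot I' f) ⊣ β) ∧
        ∀ A : TwObj I, (β.obj A).obj = infObj f A) ∧
    ((∃ L : ObjectProperty.FullSubcategory (twQuot I' f) ⥤ TwObj I',
        Nonempty (L ⊣ twResF I' f hf)) ∧ (twResF I' f hf).Final) := by
  exact ⟨⟨betaF f hf, ⟨adjA f hf⟩, fun _ => rfl⟩,
    ⟨⟨LF f hf, ⟨adjB f hf⟩⟩, Functor.final_of_adjunction (adjB f hf)⟩⟩
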